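/- (Jacobian at the ZI solution is Hurwitz) Under the hypotheses that −(B_red + [b_shunt]) is positive definite with nonpositive off-diagonal entries and I_shunt > B_red E_L* componentwise, let E_L^{ZI} := (B_red + [b_shunt])^{−1}(B_red E_L* − I_shunt) ∈ ℝ^n_{>0}. Then the Jacobian of the map F(E_L) := [E_L][b_shunt]E_L + [E_L]I_shunt + [E_L]B_red(E_L − E_L*) evaluated at E_L^{ZI} equals [E_L^{ZI}](B_red + [b_shunt]), and this matrix is Hurwitz (all its eigenvalues are real and strictly negative). -/

import Mathlib

open Matrix

lemma mmatrix_pos {n : ℕ} {N : Matrix (Fin n) (Fin n) ℝ} (hN : N.PosDef)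
    (hZ : ∀ i j, i ≠ j → N i j ≤ 0) {x c : Fin n → ℝ}
    (hx : N.mulVec x = c) (hc : ∀ i, 0 < c i) : ∀ i, 0 < x i := by
  set y : Fin n → ℝ := fun i => min (x i) 0 with hy
  have hy0 : y = 0 := by
    by_contra hyne
    have hpos : 0 < y ⬝ᵥ N.mulVec y := by
      have := hN.dotProduct_mulVec_pos hyne
      simpa using this
    have h1 : y ⬝ᵥ N.mulVec y = y ⬝ᵥ c - y ⬝ᵥ N.mulVec (x - y) := by
      rw [← hx, mulVec_sub, dotProduct_sub]
      ring
    have h2 : y ⬝ᵥ c ≤ 0 := by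
      apply Finset.sum_nonpos
      intro i _
      exact mul_nonpos_iff.mpr (Or.inr ⟨min_le_right _ _, (hc i).le⟩)
    have h3 : 0 ≤ y ⬝ᵥ N.mulVec (x - y) := by
      unfold dotProduct Matrix.mulVec dotProduct
      apply Finset.sum_nonneg
      intro i _
      rw [Finset.mul_sum]
      apply Finset.sum_nonneg
      intro j _
      show (0:ℝ) ≤ y i * (N i j * (x - y) j)
      rcases eq_or_ne i j with rfl | hij
      · have h0 : y i * (x i - y i) = 0 := by
          rcases le_total (x i) 0 with h | h
          · simp [hy, min_eq_left h]
          · simp [hy, min_eq_right h]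
        have hsub : (x - y) i = x i - y i := rfl
        rw [hsub]
        have : y i * (N i i * (x i - y i)) = N i i * (y i * (x i - y i)) := by ring
        rw [this, h0, mul_zero]
      · have hyi : y i ≤ 0 := min_le_right _ _
        have hNij : N i j ≤ 0 := hZ i j hij
        have hxy : 0 ≤ (x - y) j := by
          simp only [Pi.sub_apply, hy, sub_nonneg]
          exact min_le_left _ _
        have h4 : 0 ≤ y i * N i j := mul_nonneg_iff.mpr (Or.inr ⟨hyi, hNij⟩)
        have h5 : 0 ≤ y i * N i j * (x - y) j := mul_nonneg h4 hxy
        linarith [h5, (by ring : y i * N i j * (x - y) j = y i * (N i j * (x - y) j))]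
    linarith
  have hxnn : ∀ i, 0 ≤ x i := by
    intro i
    have h := congrFun hy0 i
    simp only [hy, Pi.zero_apply] at h
    exact min_eq_right_iff.mp h
  intro i
  by_contra hxi
  push_neg at hxi
  have hxi0 : x i = 0 := le_antisymm hxi (hxnn i)
  have hci : c i ≤ 0 := by
    rw [← hx]
    show (fun j => N i j) ⬝ᵥ x ≤ 0
    apply Finset.sum_nonpos
    intro j _
    rcases eq_or_ne i j with rfl | hij
    · simp [hxi0]
    · exact mul_nonpos_iff.mpr (Or.inr ⟨hZ i j hij, hxnn j⟩)
  exact absurd (hc i) (not_lt.mpr hci)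

lemma quad_form_mapped {n : ℕ} {N : Matrix (Fin n) (Fin n) ℝ} (hN : N.PosDef)
    (v : Fin n → ℂ) (hv : v ≠ 0) :
    (star v ⬝ᵥ (N.map Complex.ofReal).mulVec v).im = 0 ∧
    0 < (star v ⬝ᵥ (N.map Complex.ofReal).mulVec v).re := by
  set x : Fin n → ℝ := fun i => (v i).re with hxdef
  set y : Fin n → ℝ := fun i => (v i).im with hydef
  have hsymm : ∀ i j, N j i = N i j := fun i j => by
    have := hN.1.apply i j
    simpa using this
  have hexp : star v ⬝ᵥ (N.map Complex.ofReal).mulVec v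
      = ∑ i, ∑ j, (starRingEnd ℂ) (v i) * ((N i j : ℂ) * v j) := by
    unfold dotProduct Matrix.mulVec dotProduct
    apply Finset.sum_congr rfl
    intro i _
    rw [Finset.mul_sum]
    apply Finset.sum_congr rfl
    intro j _
    simp [Matrix.map_apply, mul_comm, Pi.star_apply, RCLike.star_def]
  have hre : (star v ⬝ᵥ (N.map Complex.ofReal).mulVec v).re
      = x ⬝ᵥ N.mulVec x + y ⬝ᵥ N.mulVec y := by
    rw [hexp, Complex.re_sum]
    unfold dotProduct Matrix.mulVec dotProduct
    rw [← Finset.sum_add_distrib]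
    apply Finset.sum_congr rfl
    intro i _
    rw [Complex.re_sum, Finset.mul_sum, Finset.mul_sum, ← Finset.sum_add_distrib]
    apply Finset.sum_congr rfl
    intro j _
    simp [Complex.mul_re, Complex.mul_im, hxdef, hydef]
  have him : (star v ⬝ᵥ (N.map Complex.ofReal).mulVec v).im = 0 := by
    rw [hexp, Complex.im_sum]
    simp_rw [Complex.im_sum]
    have e1 : ∀ i j : Fin n, ((starRingEnd ℂ) (v i) * ((N i j : ℂ) * v j)).im
        = N i j * (x i * y j) - N i j * (y i * x j) := by
      intro i j
      simp [Complex.mul_re, Complex.mul_im, hxdef, hydef]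
      ring
    calc ∑ i, ∑ j, ((starRingEnd ℂ) (v i) * ((N i j : ℂ) * v j)).im
        = ∑ i, ∑ j, (N i j * (x i * y j) - N i j * (y i * x j)) := by
          apply Finset.sum_congr rfl; intro i _
          exact Finset.sum_congr rfl fun j _ => e1 i j
      _ = (∑ i, ∑ j, N i j * (x i * y j)) - ∑ i, ∑ j, N i j * (y i * x j) := by
          rw [← Finset.sum_sub_distrib]
          exact Finset.sum_congr rfl fun i _ => Finset.sum_sub_distrib _ _
      _ = 0 := by
          rw [sub_eq_zero, Finset.sum_comm]
          apply Finset.sum_congr rfl; intro i _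
          apply Finset.sum_congr rfl; intro j _
          rw [hsymm i j]; ring
  refine ⟨him, ?_⟩
  rw [hre]
  have hxy : x ≠ 0 ∨ y ≠ 0 := by
    by_contra hne
    push_neg at hne
    apply hv
    funext i
    have h1 := congrFun hne.1 i
    have h2 := congrFun hne.2 i
    simp only [hxdef, hydef, Pi.zero_apply] at h1 h2
    exact Complex.ext h1 h2
  have hx0 : 0 ≤ x ⬝ᵥ N.mulVec x := by simpa using hN.posSemidef.dotProduct_mulVec_nonneg x
  have hy0 : 0 ≤ y ⬝ᵥ N.mulVec y := by simpa using hN.posSemidef.dotProduct_mulVec_nonneg y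
  rcases hxy with hx | hy
  · have := hN.dotProduct_mulVec_pos hx
    simp only [star_trivial] at this
    linarith
  · have := hN.dotProduct_mulVec_pos hy
    simp only [star_trivial] at this
    linarith

lemma exists_eigenvec {n : ℕ} {A : Matrix (Fin n) (Fin n) ℂ} {μ : ℂ}
    (h : μ ∈ spectrum ℂ A) : ∃ v : Fin n → ℂ, v ≠ 0 ∧ A.mulVec v = μ • v := by
  rw [spectrum.mem_iff] at h
  have hdet : (μ • (1 : Matrix (Fin n) (Fin n) ℂ) - A).det = 0 := by
    by_contra hd
    apply h
    have : IsUnit (μ • (1 : Matrix (Fin n) (Fin n) ℂ) - A) :=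
      (Matrix.isUnit_iff_isUnit_det _).mpr (isUnit_iff_ne_zero.mpr hd)
    convert this using 2
    simp [Algebra.algebraMap_eq_smul_one]
  obtain ⟨v, hv, hv0⟩ := Matrix.exists_mulVec_eq_zero_iff.mpr hdet
  refine ⟨v, hv, ?_⟩
  rw [sub_mulVec, smul_mulVec, one_mulVec, sub_eq_zero] at hv0
  exact hv0.symm

lemma spec_neg {n : ℕ} {N : Matrix (Fin n) (Fin n) ℝ} (hN : N.PosDef)
    {d : Fin n → ℝ} (hd : ∀ i, 0 < d i) {μ : ℂ}
    (hμ : μ ∈ spectrum ℂ (((Matrix.diagonal d) * (-N)).map Complex.ofReal)) :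
    μ.im = 0 ∧ μ.re < 0 := by
  obtain ⟨v, hv, heig⟩ := exists_eigenvec hμ
  set w : Fin n → ℂ := (N.map Complex.ofReal).mulVec v with hw
  have hcomp : ∀ i, (d i : ℂ) * w i = (-μ) * v i := by
    intro i
    have h1 := congrFun heig i
    simp only [Matrix.mulVec, dotProduct, Matrix.map_apply, Matrix.diagonal_mul,
      Matrix.neg_apply, Pi.smul_apply, smul_eq_mul] at h1
    have h3 : w i = ∑ x, (N i x : ℂ) * v x := by
      simp [hw, Matrix.mulVec, dotProduct, Matrix.map_apply]
    have h4 : ∑ x, ((d i * -N i x : ℝ) : ℂ) * v x = -((d i : ℂ) * w i) := by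
      rw [h3, Finset.mul_sum, ← Finset.sum_neg_distrib]
      exact Finset.sum_congr rfl fun x _ => by push_cast; ring
    rw [h4] at h1
    linear_combination -h1
  set β : ℝ := ∑ i, Complex.normSq (v i) / d i with hβ
  have hβpos : 0 < β := by
    obtain ⟨i0, hi0⟩ := Function.ne_iff.mp hv
    apply Finset.sum_pos' (fun i _ => div_nonneg (Complex.normSq_nonneg _) (hd i).le)
    exact ⟨i0, Finset.mem_univ _, div_pos (Complex.normSq_pos.mpr hi0) (hd i0)⟩
  have hq : star v ⬝ᵥ w = (-μ) * (β : ℂ) := by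
    unfold dotProduct
    have term : ∀ i, (star v) i * w i = (-μ) * ((Complex.normSq (v i) / d i : ℝ) : ℂ) := by
      intro i
      have hdine : (d i : ℂ) ≠ 0 := Complex.ofReal_ne_zero.mpr (hd i).ne'
      have e : (star v) i * w i = (-μ) * ((starRingEnd ℂ) (v i) * v i) / (d i : ℂ) := by
        rw [Pi.star_apply, RCLike.star_def]
        field_simp
        linear_combination ((starRingEnd ℂ) (v i)) * (hcomp i)
      rw [e]
      rw [show (starRingEnd ℂ) (v i) * v i = (Complex.normSq (v i) : ℂ) from
        Complex.normSq_eq_conj_mul_self.symm]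
      push_cast
      ring
    calc ∑ i, (star v) i * w i = ∑ i, (-μ) * ((Complex.normSq (v i) / d i : ℝ) : ℂ) :=
          Finset.sum_congr rfl fun i _ => term i
      _ = (-μ) * ∑ i, ((Complex.normSq (v i) / d i : ℝ) : ℂ) := by rw [Finset.mul_sum]
      _ = (-μ) * (β : ℂ) := by rw [hβ]; push_cast; ring
  obtain ⟨him, hre⟩ := quad_form_mapped hN v hv
  rw [show (star v ⬝ᵥ (N.map Complex.ofReal).mulVec v) = star v ⬝ᵥ w from rfl, hq] at him hre
  simp only [Complex.mul_im, Complex.mul_re, Complex.ofReal_re, Complex.ofReal_im,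
    Complex.neg_im, Complex.neg_re, mul_zero, zero_mul, add_zero, sub_zero] at him hre
  constructor
  · have : -μ.im * β = 0 := by linarith
    rcases mul_eq_zero.mp this with h | h
    · linarith [neg_eq_zero.mp h]
    · exact absurd h hβpos.ne'
  · nlinarith

/-- Jacobian at the ZI solution is Hurwitz: the Jacobian of
`F(E_L) = [E_L][b_shunt]E_L + [E_L]I_shunt + [E_L]B_red(E_L - E_L*)` at
`E_L^ZI = (B_red + [b_shunt])⁻¹(B_red E_L* - I_shunt)` equals
`[E_L^ZI](B_red + [b_shunt])`, and this matrix is Hurwitz with all eigenvalues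
real and strictly negative. -/
theorem ZI_jacobian_hurwitz {n : ℕ} (hn : 0 < n)
    (Bred : Matrix (Fin n) (Fin n) ℝ) (hsym : Bred.IsSymm)
    (ELstar bshunt Ishunt : Fin n → ℝ)
    (hM1 : (-(Bred + Matrix.diagonal bshunt)).PosDef)
    (hM2 : ∀ i j, i ≠ j → (-(Bred + Matrix.diagonal bshunt)) i j ≤ 0)
    (hI : ∀ i, (Bred.mulVec ELstar) i < Ishunt i) :
    let ELZI := (Bred + Matrix.diagonal bshunt)⁻¹.mulVec (Bred.mulVec ELstar - Ishunt)
    let J := Matrix.diagonal ELZI * (Bred + Matrix.diagonal bshunt)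
    (∀ i, 0 < ELZI i) ∧
    HasFDerivAt
      (fun EL : Fin n → ℝ =>
        (Matrix.diagonal EL).mulVec ((Matrix.diagonal bshunt).mulVec EL) +
        (Matrix.diagonal EL).mulVec Ishunt +
        (Matrix.diagonal EL).mulVec (Bred.mulVec (EL - ELstar)))
      (LinearMap.toContinuousLinearMap (Matrix.mulVecLin J)) ELZI ∧
    ∀ μ ∈ spectrum ℂ (J.map Complex.ofReal), μ.im = 0 ∧ μ.re < 0 := by
  intro ELZI J
  set M : Matrix (Fin n) (Fin n) ℝ := Bred + Matrix.diagonal bshunt with hM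
  have hMdet : IsUnit M.det := by
    have h1 : (0:ℝ) < (-M).det := hM1.det_pos
    rw [Matrix.det_neg] at h1
    apply isUnit_iff_ne_zero.mpr
    intro h0
    rw [h0, mul_zero] at h1
    exact lt_irrefl 0 h1
  have hMeq : M *ᵥ ELZI = Bred *ᵥ ELstar - Ishunt := by
    show M *ᵥ (M⁻¹ *ᵥ (Bred *ᵥ ELstar - Ishunt)) = _
    rw [mulVec_mulVec, Matrix.mul_nonsing_inv _ hMdet, one_mulVec]
  set cvec : Fin n → ℝ := Ishunt - Bred *ᵥ ELstar with hcvec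
  have hNx : (-M) *ᵥ ELZI = cvec := by
    rw [neg_mulVec, hMeq, hcvec, neg_sub]
  have hcpos : ∀ i, 0 < cvec i := fun i => by
    simp only [hcvec, Pi.sub_apply, sub_pos]
    exact hI i
  have part1 : ∀ i, 0 < ELZI i := mmatrix_pos hM1 hM2 hNx hcpos
  refine ⟨part1, ?_, ?_⟩
  · -- derivative
    have hFeq : (fun EL : Fin n → ℝ =>
        (Matrix.diagonal EL).mulVec ((Matrix.diagonal bshunt).mulVec EL) +
        (Matrix.diagonal EL).mulVec Ishunt +
        (Matrix.diagonal EL).mulVec (Bred.mulVec (EL - ELstar)))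
        = fun EL => EL * (M *ᵥ EL + cvec) := by
      funext EL
      funext i
      simp only [hM, hcvec, Pi.add_apply, Pi.mul_apply, add_mulVec, mulVec_sub,
        mulVec_diagonal, Pi.sub_apply]
      ring
    rw [hFeq]
    have hG : HasFDerivAt (fun EL : Fin n → ℝ => M *ᵥ EL + cvec)
        (LinearMap.toContinuousLinearMap (Matrix.mulVecLin M)) ELZI := by
      have h := (LinearMap.toContinuousLinearMap (Matrix.mulVecLin M)).hasFDerivAt (x := ELZI)
      exact h.add_const cvec
    have hid : HasFDerivAt (fun EL : Fin n → ℝ => EL)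
        (ContinuousLinearMap.id ℝ (Fin n → ℝ)) ELZI := hasFDerivAt_id ELZI
    have hmul := hid.mul hG
    have hG0 : M *ᵥ ELZI + cvec = 0 := by
      rw [hMeq, hcvec]
      abel
    refine hmul.congr_fderiv (Eq.symm ?_)
    apply ContinuousLinearMap.ext
    intro h
    show J *ᵥ h = _
    simp only [ContinuousLinearMap.add_apply, ContinuousLinearMap.smul_apply,
      ContinuousLinearMap.coe_id', id_eq, LinearMap.coe_toContinuousLinearMap',
      Matrix.mulVecLin_apply, hG0]
    rw [zero_smul, add_zero]
    show (Matrix.diagonal ELZI * M) *ᵥ h = _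
    rw [← mulVec_mulVec]
    funext i
    simp [mulVec_diagonal, Pi.smul_apply', smul_eq_mul]
  · -- spectrum
    intro μ hμ
    refine spec_neg hM1 part1 ?_
    rw [neg_neg]
    exact hμ
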